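/- Let S be a semigroup that is a finite disjoint union of free monogenic subsemigroups N_a = ⟨a⟩ (a ∈ A). Then the collection of sets { T(a,x,b) : a, b ∈ A, x ∈ S }, where T(a,x,b) = { y ∈ N_a : y·x ∈ N_b }, is finite. -/

import Mathlib

/-- `spow a n` is the `n`-th power of `a` in a semigroup, for `n ≥ 1`
(with the junk value `a` at `n = 0`). -/
def spow {S : Type*} [Semigroup S] (a : S) : ℕ → S
  | 0 => a
  | 1 => a
  | (n + 2) => spow a (n + 1) * a

/-- The subsemigroup (as a set) generated by `a`: all positive powers of `a`. -/
def Nblock {S : Type*} [Semigroup S] (a : S) : Set S :=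
  {x | ∃ i : ℕ, 1 ≤ i ∧ x = spow a i}

/-- `Tset a x b = { y ∈ N_a : y * x ∈ N_b }`. -/
def Tset {S : Type*} [Semigroup S] (a x b : S) : Set S :=
  {y | y ∈ Nblock a ∧ y * x ∈ Nblock b}

namespace Stmt9Aux

set_option linter.unusedSectionVars false

lemma spow_succ {S : Type*} [Semigroup S] (a : S) {n : ℕ} (hn : 1 ≤ n) :
    spow a (n + 1) = spow a n * a := by
  obtain ⟨m, rfl⟩ : ∃ m, n = m + 1 := ⟨n - 1, by omega⟩
  rfl

lemma spow_add {S : Type*} [Semigroup S] (a : S) {m n : ℕ} (hm : 1 ≤ m) (hn : 1 ≤ n) :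
    spow a (m + n) = spow a m * spow a n := by
  induction n with
  | zero => omega
  | succ k ih =>
    rcases Nat.lt_or_ge k 1 with hk | hk
    · interval_cases k
      rw [spow_succ a hm]; rfl
    · rw [show m + (k + 1) = (m + k) + 1 by ring, spow_succ a (by omega), ih hk,
        mul_assoc, ← spow_succ a hk]

section Core

variable {S : Type*} [Semigroup S] {A : Type*} [Finite A]
variable (gen : A → S)
variable (hcover : ∀ x : S, ∃ a : A, x ∈ Nblock (gen a))
variable (hfree : ∀ (a b : A) (i j : ℕ), 1 ≤ i → 1 ≤ j →
      spow (gen a) i = spow (gen b) j → a = b ∧ i = j)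

/-- the block of an element -/
noncomputable def bk (s : S) : A := (hcover s).choose

lemma bk_mem' (s : S) : ∃ i, 1 ≤ i ∧ s = spow (gen (bk gen hcover s)) i :=
  (hcover s).choose_spec

/-- the exponent of an element -/
noncomputable def ex (s : S) : ℕ := (bk_mem' gen hcover s).choose

lemma ex_pos (s : S) : 1 ≤ ex gen hcover s := (bk_mem' gen hcover s).choose_spec.1

lemma bk_ex_spec (s : S) : s = spow (gen (bk gen hcover s)) (ex gen hcover s) :=
  (bk_mem' gen hcover s).choose_spec.2

include hfree in
lemma bk_ex_eq {s : S} {c : A} {k : ℕ} (hk : 1 ≤ k) (h : s = spow (gen c) k) :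
    bk gen hcover s = c ∧ ex gen hcover s = k :=
  hfree _ _ _ _ (ex_pos gen hcover s) hk ((bk_ex_spec gen hcover s).symm.trans h)

include hfree in
lemma bk_spow {c : A} {k : ℕ} (hk : 1 ≤ k) : bk gen hcover (spow (gen c) k) = c :=
  (bk_ex_eq gen hcover hfree hk rfl).1

include hfree in
lemma mem_Nblock_iff {s : S} {c : A} : s ∈ Nblock (gen c) ↔ bk gen hcover s = c := by
  constructor
  · rintro ⟨i, hi, rfl⟩
    exact bk_spow gen hcover hfree hi
  · intro h
    exact ⟨ex gen hcover s, ex_pos gen hcover s, by rw [← h]; exact bk_ex_spec gen hcover s⟩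

include hcover hfree in
/-- Lemma E (right version): right multiplication cannot decrease exponents within a block. -/
lemma le_of_pow_mul {η : A} (v : S) {g g' : ℕ} (hg : 1 ≤ g) (hg' : 1 ≤ g')
    (h : spow (gen η) g * v = spow (gen η) g') : g ≤ g' := by
  by_contra hlt
  push_neg at hlt
  set r := g - g' with hrdef
  have hr1 : 1 ≤ r := by omega
  have hR : ∀ m, g ≤ m → spow (gen η) m * v = spow (gen η) (m - r) := by
    intro m hm
    obtain ⟨t, rfl⟩ : ∃ t, m = g + t := ⟨m - g, by omega⟩
    have harith : g + t - r = g' + t := by omega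
    rcases Nat.eq_zero_or_pos t with h0 | ht
    · subst h0
      rw [harith]
      simpa using h
    · rw [harith, show g + t = t + g by omega, show g' + t = t + g' by omega,
        spow_add _ ht hg, spow_add _ ht hg', mul_assoc, h]
  set ν := bk gen hcover v with hν
  set e := ex gen hcover v with he
  have he1 : 1 ≤ e := ex_pos gen hcover v
  have hv : v = spow (gen ν) e := bk_ex_spec gen hcover v
  have hW : ∀ K, 1 ≤ K → ∀ m, g + (K - 1) * r ≤ m →
      spow (gen η) m * spow (gen ν) (K * e) = spow (gen η) (m - K * r) := by
    intro K
    induction K with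
    | zero => omega
    | succ K ih =>
      intro _ m hm
      rcases Nat.eq_zero_or_pos K with h0 | hK
      · subst h0
        simp only [zero_add, one_mul, ← hv]
        exact hR m (by omega)
      · have hKe : 1 ≤ K * e := Nat.mul_pos hK he1
        have hsplit : spow (gen ν) ((K + 1) * e) = spow (gen ν) (K * e) * v := by
          rw [hv, ← spow_add _ hKe he1, show K * e + e = (K + 1) * e by ring]
        have hm' : g + (K - 1) * r ≤ m := by
          have : (K - 1) * r ≤ (K + 1 - 1) * r := Nat.mul_le_mul_right r (by omega)
          omega
        have hside : g ≤ m - K * r := by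
          have : (K + 1 - 1) * r = K * r := by simp
          omega
        rw [hsplit, ← mul_assoc, ih hK m hm', hR (m - K * r) hside]
        congr 1
        have : (K + 1) * r = K * r + r := by ring
        omega
  set C : ℕ → S := fun K => spow (gen ν) (K * e) * spow (gen η) (K * r) with hCdef
  have hC : ∀ K, 1 ≤ K → spow (gen η) (g + K * r) * C K = spow (gen η) (g + K * r) := by
    intro K hK
    have hKr : 1 ≤ K * r := Nat.mul_pos hK hr1
    have hrange : g + (K - 1) * r ≤ g + K * r := by
      have : (K - 1) * r ≤ K * r := Nat.mul_le_mul_right r (by omega)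
      omega
    calc spow (gen η) (g + K * r) * C K
        = (spow (gen η) (g + K * r) * spow (gen ν) (K * e)) * spow (gen η) (K * r) := by
          rw [hCdef, ← mul_assoc]
      _ = spow (gen η) (g + K * r - K * r) * spow (gen η) (K * r) := by
          rw [hW K hK _ hrange]
      _ = spow (gen η) (g + K * r) := by
          rw [show g + K * r - K * r = g by omega, ← spow_add _ hg hKr]
  have hCmul : ∀ K K', 1 ≤ K' → K' + g ≤ K → C K * C K' = C K := by
    intro K K' hK' hKK
    obtain ⟨K₂, rfl⟩ : ∃ K₂, K' = K₂ + 1 := ⟨K' - 1, by omega⟩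
    have hgr : g ≤ g * r := Nat.le_mul_of_pos_right g hr1
    have hmm : (K₂ + 1 + g) * r ≤ K * r := Nat.mul_le_mul_right r hKK
    have hmm' : (K₂ + 1) * r + g * r ≤ K * r := by
      have : (K₂ + 1 + g) * r = (K₂ + 1) * r + g * r := by ring
      omega
    have hrange : g + (K₂ + 1 - 1) * r ≤ K * r := by
      have h3 : (K₂ + 1 - 1) * r = K₂ * r := by simp
      have h4 : (K₂ + 1) * r = K₂ * r + r := by ring
      omega
    have hge1 : 1 ≤ K * r - (K₂ + 1) * r := by omega
    have hle : (K₂ + 1) * r ≤ K * r := by omega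
    calc C K * C (K₂ + 1)
        = spow (gen ν) (K * e) * ((spow (gen η) (K * r) * spow (gen ν) ((K₂ + 1) * e)) *
            spow (gen η) ((K₂ + 1) * r)) := by
          rw [hCdef, mul_assoc, ← mul_assoc (spow (gen η) (K * r))]
      _ = spow (gen ν) (K * e) * (spow (gen η) (K * r - (K₂ + 1) * r) *
            spow (gen η) ((K₂ + 1) * r)) := by
          rw [hW (K₂ + 1) hK' (K * r) hrange]
      _ = spow (gen ν) (K * e) * spow (gen η) (K * r) := by
          rw [← spow_add _ hge1 (Nat.mul_pos hK' hr1), Nat.sub_add_cancel hle]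
      _ = C K := rfl
  obtain ⟨β, hβ⟩ := Finite.exists_infinite_fiber (fun K : ℕ => bk gen hcover (C (K + 1)))
  have hβinf : ((fun K : ℕ => bk gen hcover (C (K + 1))) ⁻¹' {β}).Infinite :=
    Set.infinite_coe_iff.mp hβ
  obtain ⟨K₁, hK₁⟩ := hβinf.nonempty
  obtain ⟨K₂, hK₂, hK₂gt⟩ := hβinf.exists_gt (K₁ + g + 1)
  have hb₁ : bk gen hcover (C (K₁ + 1)) = β := hK₁
  have hb₂ : bk gen hcover (C (K₂ + 1)) = β := hK₂
  have hex₁ := ex_pos gen hcover (C (K₁ + 1))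
  have hex₂ := ex_pos gen hcover (C (K₂ + 1))
  have r₁ : C (K₁ + 1) = spow (gen β) (ex gen hcover (C (K₁ + 1))) := by
    conv_lhs => rw [bk_ex_spec gen hcover (C (K₁ + 1)), hb₁]
  have r₂ : C (K₂ + 1) = spow (gen β) (ex gen hcover (C (K₂ + 1))) := by
    conv_lhs => rw [bk_ex_spec gen hcover (C (K₂ + 1)), hb₂]
  have hmul := hCmul (K₂ + 1) (K₁ + 1) (by omega) (by omega)
  rw [r₁, r₂, ← spow_add _ hex₂ hex₁] at hmul
  have := (hfree _ _ _ _ (by omega) hex₂ hmul).2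
  omega

include hcover hfree in
/-- Lemma E (left version): left multiplication cannot decrease exponents within a block. -/
lemma le_of_mul_pow {η : A} (v : S) {g g' : ℕ} (hg : 1 ≤ g) (hg' : 1 ≤ g')
    (h : v * spow (gen η) g = spow (gen η) g') : g ≤ g' := by
  by_contra hlt
  push_neg at hlt
  set r := g - g' with hrdef
  have hr1 : 1 ≤ r := by omega
  have hR : ∀ m, g ≤ m → v * spow (gen η) m = spow (gen η) (m - r) := by
    intro m hm
    obtain ⟨t, rfl⟩ : ∃ t, m = g + t := ⟨m - g, by omega⟩
    have harith : g + t - r = g' + t := by omega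
    rcases Nat.eq_zero_or_pos t with h0 | ht
    · subst h0
      rw [harith]
      simpa using h
    · rw [harith, spow_add _ hg ht, spow_add _ hg' ht, ← mul_assoc, h]
  set ν := bk gen hcover v with hν
  set e := ex gen hcover v with he
  have he1 : 1 ≤ e := ex_pos gen hcover v
  have hv : v = spow (gen ν) e := bk_ex_spec gen hcover v
  have hW : ∀ K, 1 ≤ K → ∀ m, g + (K - 1) * r ≤ m →
      spow (gen ν) (K * e) * spow (gen η) m = spow (gen η) (m - K * r) := by
    intro K
    induction K with
    | zero => omega
    | succ K ih =>
      intro _ m hm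
      rcases Nat.eq_zero_or_pos K with h0 | hK
      · subst h0
        simp only [zero_add, one_mul, ← hv]
        exact hR m (by omega)
      · have hKe : 1 ≤ K * e := Nat.mul_pos hK he1
        have hsplit : spow (gen ν) ((K + 1) * e) = v * spow (gen ν) (K * e) := by
          rw [hv, ← spow_add _ he1 hKe, show e + K * e = (K + 1) * e by ring]
        have hm' : g + (K - 1) * r ≤ m := by
          have : (K - 1) * r ≤ (K + 1 - 1) * r := Nat.mul_le_mul_right r (by omega)
          omega
        have hside : g ≤ m - K * r := by
          have : (K + 1 - 1) * r = K * r := by simp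
          omega
        rw [hsplit, mul_assoc, ih hK m hm', hR (m - K * r) hside]
        congr 1
        have : (K + 1) * r = K * r + r := by ring
        omega
  set C : ℕ → S := fun K => spow (gen η) (K * r) * spow (gen ν) (K * e) with hCdef
  have hC : ∀ K, 1 ≤ K → C K * spow (gen η) (g + K * r) = spow (gen η) (g + K * r) := by
    intro K hK
    have hKr : 1 ≤ K * r := Nat.mul_pos hK hr1
    have hrange : g + (K - 1) * r ≤ g + K * r := by
      have : (K - 1) * r ≤ K * r := Nat.mul_le_mul_right r (by omega)
      omega
    calc C K * spow (gen η) (g + K * r)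
        = spow (gen η) (K * r) * (spow (gen ν) (K * e) * spow (gen η) (g + K * r)) := by
          rw [hCdef, mul_assoc]
      _ = spow (gen η) (K * r) * spow (gen η) (g + K * r - K * r) := by
          rw [hW K hK _ hrange]
      _ = spow (gen η) (g + K * r) := by
          rw [show g + K * r - K * r = g by omega, ← spow_add _ hKr hg,
            show K * r + g = g + K * r by omega]
  have hCmul : ∀ K K', 1 ≤ K' → K' + g ≤ K → C K' * C K = C K := by
    intro K K' hK' hKK
    obtain ⟨K₂, rfl⟩ : ∃ K₂, K' = K₂ + 1 := ⟨K' - 1, by omega⟩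
    have hgr : g ≤ g * r := Nat.le_mul_of_pos_right g hr1
    have hmm : (K₂ + 1 + g) * r ≤ K * r := Nat.mul_le_mul_right r hKK
    have hmm' : (K₂ + 1) * r + g * r ≤ K * r := by
      have : (K₂ + 1 + g) * r = (K₂ + 1) * r + g * r := by ring
      omega
    have hrange : g + (K₂ + 1 - 1) * r ≤ K * r := by
      have h3 : (K₂ + 1 - 1) * r = K₂ * r := by simp
      have h4 : (K₂ + 1) * r = K₂ * r + r := by ring
      omega
    have hge1 : 1 ≤ K * r - (K₂ + 1) * r := by omega
    have hle : (K₂ + 1) * r ≤ K * r := by omega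
    calc C (K₂ + 1) * C K
        = (spow (gen η) ((K₂ + 1) * r) * (spow (gen ν) ((K₂ + 1) * e) *
            spow (gen η) (K * r))) * spow (gen ν) (K * e) := by
          rw [hCdef, mul_assoc, ← mul_assoc (spow (gen ν) ((K₂ + 1) * e)), ← mul_assoc]
      _ = (spow (gen η) ((K₂ + 1) * r) * spow (gen η) (K * r - (K₂ + 1) * r)) *
            spow (gen ν) (K * e) := by
          rw [hW (K₂ + 1) hK' (K * r) hrange]
      _ = spow (gen η) (K * r) * spow (gen ν) (K * e) := by
          rw [← spow_add _ (Nat.mul_pos hK' hr1) hge1, Nat.add_sub_cancel' hle]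
      _ = C K := rfl
  obtain ⟨β, hβ⟩ := Finite.exists_infinite_fiber (fun K : ℕ => bk gen hcover (C (K + 1)))
  have hβinf : ((fun K : ℕ => bk gen hcover (C (K + 1))) ⁻¹' {β}).Infinite :=
    Set.infinite_coe_iff.mp hβ
  obtain ⟨K₁, hK₁⟩ := hβinf.nonempty
  obtain ⟨K₂, hK₂, hK₂gt⟩ := hβinf.exists_gt (K₁ + g + 1)
  have hb₁ : bk gen hcover (C (K₁ + 1)) = β := hK₁
  have hb₂ : bk gen hcover (C (K₂ + 1)) = β := hK₂
  have hex₁ := ex_pos gen hcover (C (K₁ + 1))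
  have hex₂ := ex_pos gen hcover (C (K₂ + 1))
  have r₁ : C (K₁ + 1) = spow (gen β) (ex gen hcover (C (K₁ + 1))) := by
    conv_lhs => rw [bk_ex_spec gen hcover (C (K₁ + 1)), hb₁]
  have r₂ : C (K₂ + 1) = spow (gen β) (ex gen hcover (C (K₂ + 1))) := by
    conv_lhs => rw [bk_ex_spec gen hcover (C (K₂ + 1)), hb₂]
  have hmul := hCmul (K₂ + 1) (K₁ + 1) (by omega) (by omega)
  rw [r₁, r₂, ← spow_add _ hex₁ hex₂] at hmul
  have := (hfree _ _ _ _ (by omega) hex₂ hmul).2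
  omega

/-- step lemma (right): from `η^g · v = η^{g'}` deduce `η^{g+t} · v = η^{g'+t}`. -/
lemma step_right {η : A} {v : S} {g g' : ℕ} (hg : 1 ≤ g) (hg' : 1 ≤ g')
    (h : spow (gen η) g * v = spow (gen η) g') :
    ∀ t, spow (gen η) (g + t) * v = spow (gen η) (g' + t) := by
  intro t
  rcases Nat.eq_zero_or_pos t with h0 | ht
  · subst h0; simpa using h
  · rw [show g + t = t + g by omega, show g' + t = t + g' by omega,
      spow_add _ ht hg, spow_add _ ht hg', mul_assoc, h]

/-- step lemma (left): from `v · η^g = η^{g'}` deduce `v · η^{g+t} = η^{g'+t}`. -/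
lemma step_left {η : A} {v : S} {g g' : ℕ} (hg : 1 ≤ g) (hg' : 1 ≤ g')
    (h : v * spow (gen η) g = spow (gen η) g') :
    ∀ t, v * spow (gen η) (g + t) = spow (gen η) (g' + t) := by
  intro t
  rcases Nat.eq_zero_or_pos t with h0 | ht
  · subst h0; simpa using h
  · rw [spow_add _ hg ht, spow_add _ hg' ht, ← mul_assoc, h]

include hcover hfree in
/-- freeze lemma for right-multiplication orbits (tables):
if `w·ζ^x` and `w·ζ^{x+D}` are in the same block `η`, the whole forward AP stays in `η`. -/
lemma freeze_right {w : S} {ζ η : A} {x D g g' : ℕ} (hx : 1 ≤ x) (hD : 1 ≤ D)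
    (hg : 1 ≤ g) (hg' : 1 ≤ g')
    (h1 : w * spow (gen ζ) x = spow (gen η) g)
    (h2 : w * spow (gen ζ) (x + D) = spow (gen η) g') :
    ∀ l, w * spow (gen ζ) (x + l * D) = spow (gen η) (g + l * (g' - g)) := by
  have hbase : spow (gen η) g * spow (gen ζ) D = spow (gen η) g' := by
    rw [← h1, ← h2, spow_add _ hx hD, mul_assoc]
  have hle : g ≤ g' := le_of_pow_mul gen hcover hfree _ hg hg' hbase
  intro l
  induction l with
  | zero => simpa using h1
  | succ l ih =>
    have hx' : 1 ≤ x + l * D := by omega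
    have harith : x + (l + 1) * D = (x + l * D) + D := by ring
    rw [harith, spow_add _ hx' hD, ← mul_assoc, ih]
    have := step_right gen hg hg' hbase (l * (g' - g))
    rw [this]
    congr 1
    have h5 : (l + 1) * (g' - g) = l * (g' - g) + (g' - g) := by ring
    omega

include hcover hfree in
/-- freeze lemma for left-multiplication orbits:
from `α^d · ζ^p = ζ^q` deduce `α^{l·d} · ζ^p = ζ^{p + l(q-p)}`. -/
lemma freeze_left {α ζ : A} {d p q : ℕ} (hd : 1 ≤ d) (hp : 1 ≤ p) (hq : 1 ≤ q)
    (h : spow (gen α) d * spow (gen ζ) p = spow (gen ζ) q) :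
    ∀ l, 1 ≤ l → spow (gen α) (l * d) * spow (gen ζ) p = spow (gen ζ) (p + l * (q - p)) := by
  have hle : p ≤ q := le_of_mul_pow gen hcover hfree _ hp hq h
  intro l
  induction l with
  | zero => omega
  | succ l ih =>
    intro _
    rcases Nat.eq_zero_or_pos l with h0 | hl
    · subst h0
      simp only [zero_add, one_mul]
      rw [h]
      congr 1
      omega
    · have hld : 1 ≤ l * d := Nat.mul_pos hl hd
      have harith : (l + 1) * d = d + l * d := by ring
      rw [harith, spow_add _ hd hld, mul_assoc, ih hl]
      have := step_left gen hp hq h (l * (q - p))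
      rw [this]
      congr 1
      have h5 : (l + 1) * (q - p) = l * (q - p) + (q - p) := by ring
      omega

/-- An infinite subset of ℕ closed under forward arithmetic progressions is,
eventually, exactly one residue class. -/
lemma ap_closed_struct {O : Set ℕ}
    (hcl : ∀ x ∈ O, ∀ y ∈ O, x < y → ∀ l : ℕ, x + l * (y - x) ∈ O)
    (hinf : O.Infinite) :
    ∃ d x₀, 1 ≤ d ∧ x₀ ∈ O ∧ (∀ k, x₀ + k * d ∈ O) ∧
      ∀ z ∈ O, x₀ < z → d ∣ z - x₀ := by
  classical
  set D : Set ℕ := {d | 1 ≤ d ∧ ∃ x ∈ O, ∀ k, x + k * d ∈ O} with hD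
  have hDne : D.Nonempty := by
    obtain ⟨x, hx⟩ := hinf.nonempty
    obtain ⟨y, hy, hxy⟩ := hinf.exists_gt x
    exact ⟨y - x, by omega, x, hx, hcl x hx y hy hxy⟩
  have hdmem := Nat.sInf_mem hDne
  obtain ⟨hd1, x₀, hx₀, hAP⟩ := hdmem
  set d := sInf D with hd
  refine ⟨d, x₀, hd1, hx₀, hAP, ?_⟩
  intro z hz hlt
  by_contra hndvd
  have hdpos : 0 < d := hd1
  set o := (z - x₀) % d with ho
  have ho1 : 1 ≤ o := by
    rcases Nat.eq_zero_or_pos o with h0 | h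
    · exact absurd (Nat.dvd_of_mod_eq_zero (ho ▸ h0)) hndvd
    · exact h
  have ho2 : o < d := Nat.mod_lt _ hdpos
  have hdm := Nat.div_add_mod (z - x₀) d
  set j := (z - x₀) / d with hj
  have hcomm : j * d = d * j := Nat.mul_comm _ _
  have hx' : x₀ + j * d ∈ O := hAP j
  have hlt' : x₀ + j * d < z := by omega
  have hsub : z - (x₀ + j * d) = o := by omega
  have hcl' := hcl _ hx' z hz hlt'
  rw [hsub] at hcl'
  have : o ∈ D := ⟨ho1, x₀ + j * d, hx', hcl'⟩
  have := Nat.sInf_le this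
  omega

include hcover hfree in
/-- Every "table" `m ↦ block(w · ζ^m)` is eventually periodic. -/
lemma table_EP (w : S) (ζ : A) :
    ∃ Q P : ℕ, 1 ≤ Q ∧ 1 ≤ P ∧ ∀ m, Q ≤ m →
      bk gen hcover (w * spow (gen ζ) (m + P)) = bk gen hcover (w * spow (gen ζ) m) := by
  classical
  haveI := Fintype.ofFinite A
  set σ : ℕ → A := fun m => bk gen hcover (w * spow (gen ζ) m) with hσ
  set O : A → Set ℕ := fun η => {m | 1 ≤ m ∧ σ m = η} with hO
  have hcl : ∀ η, ∀ x ∈ O η, ∀ y ∈ O η, x < y → ∀ l : ℕ, x + l * (y - x) ∈ O η := by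
    intro η x hx y hy hxy l
    obtain ⟨hx1, hxσ⟩ := hx
    obtain ⟨hy1, hyσ⟩ := hy
    have e₁pos := ex_pos gen hcover (w * spow (gen ζ) x)
    have e₂pos := ex_pos gen hcover (w * spow (gen ζ) y)
    have hxσ' : bk gen hcover (w * spow (gen ζ) x) = η := hxσ
    have hyσ' : bk gen hcover (w * spow (gen ζ) y) = η := hyσ
    have hrx : w * spow (gen ζ) x = spow (gen η) (ex gen hcover (w * spow (gen ζ) x)) := by
      conv_lhs => rw [bk_ex_spec gen hcover (w * spow (gen ζ) x), hxσ']
    have hry : w * spow (gen ζ) (x + (y - x)) =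
        spow (gen η) (ex gen hcover (w * spow (gen ζ) y)) := by
      rw [show x + (y - x) = y by omega]
      conv_lhs => rw [bk_ex_spec gen hcover (w * spow (gen ζ) y), hyσ']
    have hfr := freeze_right gen hcover hfree hx1 (by omega) e₁pos e₂pos hrx hry l
    constructor
    · omega
    · rw [hσ]
      simp only
      rw [hfr]
      exact bk_spow gen hcover hfree (by omega)
  have hdata : ∀ η : A, ∃ dN : ℕ × ℕ, 1 ≤ dN.1 ∧
      ∀ m, dN.2 ≤ m → m ∈ O η → ∀ k, m + k * dN.1 ∈ O η := by
    intro η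
    by_cases hinf : (O η).Infinite
    · obtain ⟨d, x₀, hd1, hx₀, hAP, hdvd⟩ := ap_closed_struct (hcl η) hinf
      refine ⟨⟨d, x₀ + 1⟩, hd1, ?_⟩
      intro m hm hmem k
      simp only at hm ⊢
      have hdd := hdvd m hmem (by omega)
      obtain ⟨c, hc⟩ := hdd
      have hcc : d * c = c * d := Nat.mul_comm _ _
      have hm' : m = x₀ + c * d := by omega
      rw [hm', show x₀ + c * d + k * d = x₀ + (c + k) * d by ring]
      exact hAP (c + k)
    · rw [Set.not_infinite] at hinf
      obtain ⟨B, hB⟩ := hinf.bddAbove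
      refine ⟨⟨1, B + 1⟩, le_rfl, ?_⟩
      intro m hm hmem
      exact absurd (hB hmem) (by simp only at hm; omega)
  choose dN h1 h2 using hdata
  set P : ℕ := ∏ η : A, (dN η).1 with hP
  set Q : ℕ := (Finset.univ.sup fun η : A => (dN η).2) + 1 with hQ
  have hP1 : 1 ≤ P := Finset.one_le_prod' (fun η _ => h1 η)
  refine ⟨Q, P, by omega, hP1, ?_⟩
  intro m hm
  set η₀ := σ m with hη₀
  have hmem : m ∈ O η₀ := ⟨by omega, rfl⟩
  have hNle : (dN η₀).2 ≤ m := by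
    have h5 := Finset.le_sup (f := fun η : A => (dN η).2) (Finset.mem_univ η₀)
    omega
  have hdvdP : (dN η₀).1 ∣ P := Finset.dvd_prod_of_mem _ (Finset.mem_univ η₀)
  obtain ⟨c, hc⟩ := hdvdP
  have := h2 η₀ m hNle hmem c
  rw [show m + c * (dN η₀).1 = m + P by rw [hc]; ring] at this
  exact this.2

/-- hitting a value along an AP inside an eventually periodic sequence happens early. -/
lemma ap_hit {β : Type*} {σ : ℕ → β} {Q P : ℕ} (hP : 1 ≤ P)
    (hEP : ∀ m, Q ≤ m → σ (m + P) = σ m) {p Δ : ℕ} (hp : 1 ≤ p) (hΔ : 1 ≤ Δ) {b : β} :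
    ∀ l, σ (p + l * Δ) = b → ∃ l', l' ≤ Q + P ∧ σ (p + l' * Δ) = b := by
  have hEPk : ∀ m, Q ≤ m → ∀ j, σ (m + j * P) = σ m := by
    intro m hm j
    induction j with
    | zero => simp
    | succ j ih =>
      rw [show m + (j + 1) * P = (m + j * P) + P by ring, hEP _ (by omega), ih]
  intro l
  induction l using Nat.strong_induction_on with
  | _ l IH =>
    intro hl
    by_cases hle : l ≤ Q + P
    · exact ⟨l, hle, hl⟩
    · push_neg at hle
      obtain ⟨l₂, rfl⟩ : ∃ l₂, l = l₂ + P := ⟨l - P, by omega⟩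
      have hQl : Q ≤ p + l₂ * Δ := by
        have : l₂ ≤ l₂ * Δ := Nat.le_mul_of_pos_right l₂ hΔ
        omega
      have hstep : σ (p + l₂ * Δ) = b := by
        have := hEPk (p + l₂ * Δ) hQl Δ
        rw [show (p + l₂ * Δ) + Δ * P = p + (l₂ + P) * Δ by ring] at this
        rw [← this]
        exact hl
      exact IH l₂ (by omega) hstep

include hcover hfree in
/-- (A): uniform bound on the first hitting time. -/
lemma hit_bound (a b : A) : ∃ N, 1 ≤ N ∧ ∀ x : S,
    (∃ i, 1 ≤ i ∧ bk gen hcover (spow (gen a) i * x) = b) →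
    ∃ i, 1 ≤ i ∧ i ≤ N ∧ bk gen hcover (spow (gen a) i * x) = b := by
  classical
  haveI := Fintype.ofFinite A
  set n := Fintype.card A with hn
  have hn1 : 1 ≤ n := Fintype.card_pos_iff.mpr ⟨a⟩
  have htab := fun (u : ℕ) (ζ : A) => table_EP gen hcover hfree (spow (gen a) u) ζ
  choose QF PF hQ1 hP1 hEP using htab
  set M := Finset.sup ((Finset.Icc 1 n) ×ˢ (Finset.univ : Finset A))
    (fun uζ => QF uζ.1 uζ.2 + PF uζ.1 uζ.2) with hM
  refine ⟨(n + 1) + n * (M + 1) + 1, by omega, ?_⟩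
  intro x hhit
  obtain ⟨h, hh1, hhb⟩ := hhit
  by_cases hsmall : ∃ i, (1 ≤ i ∧ i ≤ n + 1) ∧ bk gen hcover (spow (gen a) i * x) = b
  · obtain ⟨i, ⟨hi1, hi2⟩, hi3⟩ := hsmall
    exact ⟨i, hi1, by omega, hi3⟩
  · push_neg at hsmall
    set s : ℕ → S := fun m => spow (gen a) m * x with hs
    have hshift : ∀ m t, 1 ≤ m → 1 ≤ t → s (m + t) = spow (gen a) t * s m := by
      intro m t hm ht
      simp only [hs]
      rw [show m + t = t + m by omega, spow_add _ ht hm, mul_assoc]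
    have hbig : n + 1 < h := by
      by_contra hc
      exact (hsmall h ⟨hh1, by omega⟩) hhb
    -- pigeonhole on the first n+1 indices
    obtain ⟨i', j', hne, heq⟩ := Fintype.exists_ne_map_eq_of_card_lt
      (fun i : Fin (n + 1) => bk gen hcover (s (i.val + 1)))
      (by simp [hn])
    -- wlog i' < j'
    obtain ⟨i₁, j₁, hi₁1, hij, hj₁, hbkeq⟩ :
        ∃ i₁ j₁, 1 ≤ i₁ ∧ i₁ < j₁ ∧ j₁ ≤ n + 1 ∧
          bk gen hcover (s i₁) = bk gen hcover (s j₁) := by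
      rcases Nat.lt_or_ge i'.val j'.val with hlt | hge
      · exact ⟨i'.val + 1, j'.val + 1, by omega, by omega, by omega, heq⟩
      · have hlt : j'.val < i'.val := by
          rcases Nat.lt_or_ge j'.val i'.val with h1 | h1
          · exact h1
          · exact absurd (Fin.ext (by omega)) hne
        exact ⟨j'.val + 1, i'.val + 1, by omega, by omega, by omega, heq.symm⟩
    set ζ := bk gen hcover (s i₁) with hζ
    set p := ex gen hcover (s i₁) with hp
    set q := ex gen hcover (s j₁) with hq
    have hp1 : 1 ≤ p := ex_pos gen hcover (s i₁)
    have hq1 : 1 ≤ q := ex_pos gen hcover (s j₁)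
    have hsi : s i₁ = spow (gen ζ) p := bk_ex_spec gen hcover (s i₁)
    have hsj : s j₁ = spow (gen ζ) q := by
      conv_lhs => rw [bk_ex_spec gen hcover (s j₁)]
      rw [← hbkeq]
    set d := j₁ - i₁ with hd
    have hd1 : 1 ≤ d := by omega
    have hdn : d ≤ n := by omega
    have hrel : spow (gen a) d * spow (gen ζ) p = spow (gen ζ) q := by
      rw [← hsi, ← hshift i₁ d (by omega) hd1, show i₁ + d = j₁ by omega, hsj]
    have hpq : p ≤ q := le_of_mul_pow gen hcover hfree _ hp1 hq1 hrel
    rcases Nat.eq_or_lt_of_le hpq with hpeq | hplt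
    · -- periodic case: contradiction, since there would be an early hit
      exfalso
      have hper : ∀ m, i₁ ≤ m → s (m + d) = s m := by
        intro m hm
        rcases Nat.eq_or_lt_of_le hm with h1 | h1
        · rw [← h1, show i₁ + d = j₁ by omega, hsj, hsi, hpeq]
        · have ht1 : 1 ≤ m - i₁ := by omega
          rw [show m + d = (i₁ + d) + (m - i₁) by omega,
            hshift (i₁ + d) (m - i₁) (by omega) ht1,
            show i₁ + d = j₁ by omega, hsj, ← hpeq, ← hsi,
            ← hshift i₁ (m - i₁) (by omega) ht1, show i₁ + (m - i₁) = m by omega]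
      have hfold : ∀ t, i₁ ≤ t → bk gen hcover (s t) = b →
          ∃ m, i₁ ≤ m ∧ m < i₁ + d ∧ bk gen hcover (s m) = b := by
        intro t
        induction t using Nat.strong_induction_on with
        | _ t IH =>
          intro ht htb
          by_cases hlt2 : t < i₁ + d
          · exact ⟨t, ht, hlt2, htb⟩
          · push_neg at hlt2
            have := hper (t - d) (by omega)
            rw [show (t - d) + d = t by omega] at this
            exact IH (t - d) (by omega) (by omega) (by rw [← this]; exact htb)
      obtain ⟨m, hm1, hm2, hm3⟩ := hfold h (by omega) hhb
      exact (hsmall m ⟨by omega, by omega⟩) hm3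
    · -- growing case
      set Δ := q - p with hΔ
      have hΔ1 : 1 ≤ Δ := by omega
      have hfreeze : ∀ l, 1 ≤ l → s (i₁ + l * d) = spow (gen ζ) (p + l * Δ) := by
        intro l hl
        have hld : 1 ≤ l * d := Nat.mul_pos hl hd1
        rw [hshift i₁ (l * d) (by omega) hld, hsi,
          freeze_left gen hcover hfree hd1 hp1 hq1 hrel l hl]
      obtain ⟨l, u, hdm, hud⟩ : ∃ l u, h - i₁ = l * d + u ∧ u < d :=
        ⟨(h - i₁) / d, (h - i₁) % d, by rw [Nat.mul_comm]; exact (Nat.div_add_mod _ d).symm,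
          Nat.mod_lt _ (by omega)⟩
      rcases Nat.eq_zero_or_pos u with hu0 | hu1
      · -- hit lies on the frozen residue: impossible since ζ ≠ b there
        exfalso
        have hl1 : 1 ≤ l := by
          rcases Nat.eq_zero_or_pos l with h0 | h1
          · subst h0
            exfalso
            omega
          · exact h1
        have hsh : s h = spow (gen ζ) (p + l * Δ) := by
          rw [show h = i₁ + l * d by omega]
          exact hfreeze l hl1
        have hbkh : bk gen hcover (s h) = ζ := by
          rw [hsh]
          exact bk_spow gen hcover hfree (by omega)
        have hζb : ζ = b := by rw [← hbkh]; exact hhb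
        exact (hsmall i₁ ⟨by omega, by omega⟩) (by rw [← hζb])
      · have hl1 : 1 ≤ l := by
          rcases Nat.eq_zero_or_pos l with h0 | h1
          · subst h0
            exfalso
            omega
          · exact h1
        have hsh : s h = spow (gen a) u * spow (gen ζ) (p + l * Δ) := by
          rw [show h = (i₁ + l * d) + u by omega,
            hshift (i₁ + l * d) u (by omega) hu1, hfreeze l hl1]
        have hσhit : bk gen hcover (spow (gen a) u * spow (gen ζ) (p + l * Δ)) = b := by
          rw [← hsh]; exact hhb
        obtain ⟨l', hl'le, hl'hit⟩ :=
          ap_hit (σ := fun m => bk gen hcover (spow (gen a) u * spow (gen ζ) m))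
            (hP1 u ζ) (hEP u ζ) hp1 hΔ1 l hσhit
        have hQPM : QF u ζ + PF u ζ ≤ M := by
          have hmem : (u, ζ) ∈ (Finset.Icc 1 n) ×ˢ (Finset.univ : Finset A) := by
            rw [Finset.mem_product]
            exact ⟨Finset.mem_Icc.mpr ⟨hu1, by omega⟩, Finset.mem_univ ζ⟩
          have := Finset.le_sup (f := fun uζ : ℕ × A => QF uζ.1 uζ.2 + PF uζ.1 uζ.2) hmem
          simpa using this
        set h' := i₁ + l' * d + u with hh'
        have hsh' : s h' = spow (gen a) u * spow (gen ζ) (p + l' * Δ) := by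
          rcases Nat.eq_zero_or_pos l' with h0 | hl'1
          · rw [hh', h0, show i₁ + 0 * d + u = i₁ + u by ring,
              hshift i₁ u (by omega) hu1, hsi, show p + 0 * Δ = p by ring]
          · rw [hh', hshift (i₁ + l' * d) u (by omega) hu1, hfreeze l' hl'1]
        refine ⟨h', by omega, ?_, ?_⟩
        · have hld' : l' * d ≤ M * n :=
            Nat.mul_le_mul (by omega) hdn
          have hMn : n * (M + 1) = M * n + n := by ring
          omega
        · show bk gen hcover (s h') = b
          rw [hsh']
          exact hl'hit

include hcover hfree in
/-- (B): the family of sets `V(p) = {s : α^s β^p ∈ N_b}` is finite. -/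
lemma Vfam_finite (a b : A) :
    {V : Set ℕ | ∃ p, 1 ≤ p ∧
      V = {s : ℕ | 1 ≤ s ∧ bk gen hcover (spow (gen a) s * spow (gen b) p) = b}}.Finite := by
  classical
  set Vp : ℕ → Set ℕ := fun p =>
    {s : ℕ | 1 ≤ s ∧ bk gen hcover (spow (gen a) s * spow (gen b) p) = b} with hVp
  have hmono : ∀ p p', 1 ≤ p → p ≤ p' → Vp p ⊆ Vp p' := by
    intro p p' hp hpp' s hs
    obtain ⟨hs1, hsb⟩ := hs
    rcases Nat.eq_or_lt_of_le hpp' with h1 | h1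
    · rw [← h1]; exact ⟨hs1, hsb⟩
    · have hrep : spow (gen a) s * spow (gen b) p =
          spow (gen b) (ex gen hcover (spow (gen a) s * spow (gen b) p)) := by
        conv_lhs => rw [bk_ex_spec gen hcover (spow (gen a) s * spow (gen b) p), hsb]
      have he1 := ex_pos gen hcover (spow (gen a) s * spow (gen b) p)
      refine ⟨hs1, ?_⟩
      have hsplit : spow (gen b) p' = spow (gen b) p * spow (gen b) (p' - p) := by
        rw [← spow_add _ hp (by omega), show p + (p' - p) = p' by omega]
      rw [hsplit, ← mul_assoc, hrep, ← spow_add _ he1 (by omega)]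
      exact bk_spow gen hcover hfree (by omega)
  have hstab : ∃ P₀, 1 ≤ P₀ ∧ ∀ p, P₀ ≤ p → Vp p = Vp P₀ := by
    by_cases hne : ∃ p, 1 ≤ p ∧ (Vp p).Nonempty
    · obtain ⟨p₁, hp₁, hne₁⟩ := hne
      have hneall : ∀ p, p₁ ≤ p → (Vp p).Nonempty := fun p hp =>
        hne₁.mono (hmono p₁ p hp₁ hp)
      obtain ⟨K, hKmin⟩ : ∃ K, ∀ k, sInf (Vp (p₁ + K)) ≤ sInf (Vp (p₁ + k)) := by
        obtain ⟨K, hK⟩ := Nat.sInf_mem (Set.range_nonempty (fun k => sInf (Vp (p₁ + k))))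
        have hK' : sInf (Vp (p₁ + K)) = sInf (Set.range fun k => sInf (Vp (p₁ + k))) := hK
        refine ⟨K, fun k => ?_⟩
        rw [hK']
        exact Nat.sInf_le ⟨k, rfl⟩
      refine ⟨p₁ + K, by omega, ?_⟩
      set Istar := sInf (Vp (p₁ + K)) with hIstar
      have hIstarmem : Istar ∈ Vp (p₁ + K) := Nat.sInf_mem (hneall _ (by omega))
      have hI1 : 1 ≤ Istar := hIstarmem.1
      have hmin : ∀ p, p₁ + K ≤ p → sInf (Vp p) = Istar := by
        intro p hp
        have h1 : sInf (Vp p) ≤ Istar := Nat.sInf_le ((hmono _ p (by omega) hp) hIstarmem)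
        have h2 : Istar ≤ sInf (Vp p) := by
          have h3 := hKmin (p - p₁)
          rw [show p₁ + (p - p₁) = p by omega] at h3
          exact h3
        omega
      have hmem : ∀ p, p₁ + K ≤ p → Istar ∈ Vp p := by
        intro p hp
        have h4 := Nat.sInf_mem (hneall p (by omega))
        rw [hmin p hp] at h4
        exact h4
      have hqstep : ∀ p, p₁ + K ≤ p → ∃ qp, p ≤ qp ∧ 1 ≤ qp ∧
          spow (gen a) Istar * spow (gen b) p = spow (gen b) qp := by
        intro p hp
        have hm := hmem p hp
        have hrep : spow (gen a) Istar * spow (gen b) p =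
            spow (gen b) (ex gen hcover (spow (gen a) Istar * spow (gen b) p)) := by
          conv_lhs => rw [bk_ex_spec gen hcover (spow (gen a) Istar * spow (gen b) p), hm.2]
        refine ⟨_, ?_, ex_pos gen hcover _, hrep⟩
        exact le_of_mul_pow gen hcover hfree _ (by omega) (ex_pos gen hcover _) hrep
      choose! qF hq1 hq2 hq3 using hqstep
      have hup : ∀ k, 1 ≤ k → ∀ p, p₁ + K ≤ p → k * Istar ∈ Vp p := by
        intro k
        induction k with
        | zero => intro h0; exact absurd h0 (by omega)
        | succ k ih =>
          intro _ p hp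
          rcases Nat.eq_zero_or_pos k with h0 | hk
          · subst h0; simpa using hmem p hp
          · constructor
            · have := Nat.mul_pos (show 0 < k + 1 by omega) (show 0 < Istar by omega)
              omega
            · have hsplit : spow (gen a) ((k + 1) * Istar) =
                  spow (gen a) (k * Istar) * spow (gen a) Istar := by
                rw [← spow_add _ (Nat.mul_pos hk (by omega)) (by omega),
                  show k * Istar + Istar = (k + 1) * Istar by ring]
              rw [hsplit, mul_assoc, hq3 p hp]
              exact (ih hk (qF p) (le_trans hp (hq1 p hp))).2
      have hdown : ∀ j, ∀ p, p₁ + K ≤ p → j ∈ Vp p → ∃ k, 1 ≤ k ∧ j = k * Istar := by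
        intro j
        induction j using Nat.strong_induction_on with
        | _ j IH =>
          intro p hp hj
          have hjge : Istar ≤ j := by
            have h5 := Nat.sInf_le hj
            rw [hmin p hp] at h5
            exact h5
          rcases Nat.eq_or_lt_of_le hjge with h1 | h1
          · exact ⟨1, le_rfl, by omega⟩
          · have hjmem : j - Istar ∈ Vp (qF p) := by
              constructor
              · omega
              · have hsplit : spow (gen a) j =
                    spow (gen a) (j - Istar) * spow (gen a) Istar := by
                  rw [← spow_add _ (by omega) (by omega),
                    show (j - Istar) + Istar = j by omega]
                have h6 := hj.2
                rw [hsplit, mul_assoc, hq3 p hp] at h6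
                exact h6
            obtain ⟨k, hk1, hkeq⟩ :=
              IH (j - Istar) (by omega) (qF p) (le_trans hp (hq1 p hp)) hjmem
            refine ⟨k + 1, by omega, ?_⟩
            rw [Nat.succ_mul]
            omega
      intro p hp
      ext j
      constructor
      · intro hj
        obtain ⟨k, hk1, rfl⟩ := hdown j p hp hj
        exact hup k hk1 _ le_rfl
      · intro hj
        obtain ⟨k, hk1, rfl⟩ := hdown j _ le_rfl hj
        exact hup k hk1 p hp
    · push_neg at hne
      refine ⟨1, le_rfl, ?_⟩
      intro p hp
      rw [hne p (by omega), hne 1 le_rfl]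
  obtain ⟨P₀, hP₀1, hP₀⟩ := hstab
  apply Set.Finite.subset ((Set.finite_Icc 1 P₀).image Vp)
  rintro V ⟨p, hp1, rfl⟩
  by_cases hle : p ≤ P₀
  · exact ⟨p, Set.mem_Icc.mpr ⟨hp1, hle⟩, rfl⟩
  · exact ⟨P₀, Set.mem_Icc.mpr ⟨hP₀1, le_rfl⟩, (hP₀ p (by omega)).symm⟩

include hcover hfree in
/-- for fixed blocks `a, b`, the family of index sets of the `T`-sets is finite. -/
lemma main_ab (a b : A) :
    {I : Set ℕ | ∃ x : S,
      I = {i : ℕ | 1 ≤ i ∧ bk gen hcover (spow (gen a) i * x) = b}}.Finite := by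
  classical
  obtain ⟨N, hN1, hN⟩ := hit_bound gen hcover hfree a b
  have hVfin := Vfam_finite gen hcover hfree a b
  apply Set.Finite.subset
    (Set.Finite.insert ∅ ((Set.finite_Icc 1 N).biUnion
      (fun i₀ _ => hVfin.image (fun V => insert i₀ ((fun s => i₀ + s) '' V)))))
  rintro I ⟨x, rfl⟩
  by_cases hne : ∃ i, 1 ≤ i ∧ bk gen hcover (spow (gen a) i * x) = b
  · refine Set.mem_insert_iff.mpr (Or.inr ?_)
    set I₀ := {i : ℕ | 1 ≤ i ∧ bk gen hcover (spow (gen a) i * x) = b} with hI₀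
    obtain ⟨i', h1', hb'⟩ := hne
    have hne' : I₀.Nonempty := ⟨i', h1', hb'⟩
    set i₀ := sInf I₀ with hi₀
    have hi₀mem : i₀ ∈ I₀ := Nat.sInf_mem hne'
    obtain ⟨iN, hiN1, hiNle, hiNb⟩ := hN x ⟨i', h1', hb'⟩
    have hi₀le : i₀ ≤ N := le_trans (Nat.sInf_le ⟨hiN1, hiNb⟩) hiNle
    set p₀ := ex gen hcover (spow (gen a) i₀ * x) with hp₀
    have hp₀1 : 1 ≤ p₀ := ex_pos gen hcover _
    have hrep : spow (gen a) i₀ * x = spow (gen b) p₀ := by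
      conv_lhs => rw [bk_ex_spec gen hcover (spow (gen a) i₀ * x), hi₀mem.2]
    refine Set.mem_biUnion (Set.mem_Icc.mpr ⟨hi₀mem.1, hi₀le⟩) ?_
    refine ⟨{s : ℕ | 1 ≤ s ∧ bk gen hcover (spow (gen a) s * spow (gen b) p₀) = b},
      ⟨p₀, hp₀1, rfl⟩, ?_⟩
    ext j
    simp only [Set.mem_insert_iff, Set.mem_image, Set.mem_setOf_eq]
    constructor
    · rintro (rfl | ⟨s0, ⟨hs1, hsb⟩, rfl⟩)
      · exact hi₀mem
      · refine ⟨by omega, ?_⟩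
        have hsplit : spow (gen a) (i₀ + s0) * x =
            spow (gen a) s0 * (spow (gen a) i₀ * x) := by
          rw [show i₀ + s0 = s0 + i₀ by omega, spow_add _ hs1 hi₀mem.1, mul_assoc]
        rw [hsplit, hrep]
        exact hsb
    · rintro ⟨hj1, hjb⟩
      have hile : i₀ ≤ j := Nat.sInf_le (⟨hj1, hjb⟩ : j ∈ I₀)
      rcases Nat.eq_or_lt_of_le hile with h1 | h1
      · exact Or.inl h1.symm
      · refine Or.inr ⟨j - i₀, ⟨by omega, ?_⟩, by omega⟩
        have hjb' := hjb
        rw [show j = (j - i₀) + i₀ by omega] at hjb'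
        rw [spow_add _ (by omega) hi₀mem.1, mul_assoc, hrep] at hjb'
        exact hjb'
  · refine Set.mem_insert_iff.mpr (Or.inl ?_)
    push_neg at hne
    ext j
    simp only [Set.mem_setOf_eq, Set.mem_empty_iff_false, iff_false, not_and]
    intro hj1
    exact hne j hj1

end Core

end Stmt9Aux

theorem stmt9 {S : Type*} [Semigroup S] {A : Type*} [Finite A] (gen : A → S)
    (hcover : ∀ x : S, ∃ a : A, x ∈ Nblock (gen a))
    (hfree : ∀ (a b : A) (i j : ℕ), 1 ≤ i → 1 ≤ j →
      spow (gen a) i = spow (gen b) j → a = b ∧ i = j) :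
    {T : Set S | ∃ (a b : A) (x : S), T = Tset (gen a) x (gen b)}.Finite := by
  classical
  open Stmt9Aux in
  have hTset : ∀ (a b : A) (x : S), Tset (gen a) x (gen b) =
      (fun i => spow (gen a) i) ''
        {i : ℕ | 1 ≤ i ∧ bk gen hcover (spow (gen a) i * x) = b} := by
    intro a b x
    ext y
    constructor
    · rintro ⟨⟨i, hi1, rfl⟩, hmem⟩
      exact ⟨i, ⟨hi1, (mem_Nblock_iff gen hcover hfree).mp hmem⟩, rfl⟩
    · rintro ⟨i, ⟨hi1, hib⟩, rfl⟩
      exact ⟨⟨i, hi1, rfl⟩, (mem_Nblock_iff gen hcover hfree).mpr hib⟩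
  apply Set.Finite.subset
    (Set.finite_iUnion (fun a : A => Set.finite_iUnion (fun b : A =>
      (Stmt9Aux.main_ab gen hcover hfree a b).image
        (fun I => (fun i => spow (gen a) i) '' I))))
  rintro T ⟨a, b, x, rfl⟩
  refine Set.mem_iUnion.mpr ⟨a, Set.mem_iUnion.mpr ⟨b, ?_⟩⟩
  exact ⟨{i : ℕ | 1 ≤ i ∧ Stmt9Aux.bk gen hcover (spow (gen a) i * x) = b},
    ⟨x, rfl⟩, (hTset a b x).symm⟩
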